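/- Let Λ be a compact self-adjoint operator on a separable Hilbert space Z with eigenbasis (φₖ) and positive eigenvalues λₖ, let p be a continuous bounded nonnegative function on an interval containing the eigenvalues satisfying p(λ)² + (2/λ)p(λ) − 1 = 0 for all λ in that interval, and set P = p(Λ), A = −Λ^{-1} (with domain the range of Λ). Then for every z in the domain of A: (A P + P A − P² + I)z = 0, i.e. P solves the operational Riccati equation with B = C = S = I. -/
import Mathlib


open scoped InnerProductSpace


lemma hb_summable {Z : Type*} [NormedAddCommGroup Z] [InnerProductSpace ℝ Z]
    [CompleteSpace Z] (b : HilbertBasis ℕ ℝ Z) {a : ℕ → ℝ}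
    (ha : Summable fun k => a k ^ 2) : Summable fun k => a k • b k := by
  have hOF := (b.orthonormal.orthogonalFamily (𝕜 := ℝ))
  have := (hOF.summable_iff_norm_sq_summable a).mpr
  simp only [LinearIsometry.toSpanSingleton_apply, Real.norm_eq_abs, sq_abs] at this
  exact this ha

lemma hb_coeff {Z : Type*} [NormedAddCommGroup Z] [InnerProductSpace ℝ Z]
    [CompleteSpace Z] (b : HilbertBasis ℕ ℝ Z) {a : ℕ → ℝ}
    (ha : Summable fun k => a k ^ 2) (j : ℕ) :
    ⟪∑' k, a k • b k, b j⟫_ℝ = a j := by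
  have hs := hb_summable b ha
  have h1 : HasSum (fun k => ⟪b j, a k • b k⟫_ℝ) ⟪b j, ∑' k, a k • b k⟫_ℝ :=
    hs.hasSum.mapL (innerSL ℝ (b j))
  have h2 : HasSum (fun k => ⟪b j, a k • b k⟫_ℝ) (a j) := by
    have : (fun k => ⟪b j, a k • b k⟫_ℝ) = fun k => if k = j then a j else 0 := by
      funext k
      rw [inner_smul_right]
      rcases eq_or_ne k j with h | h
      · subst h
        rw [real_inner_self_eq_norm_sq, b.orthonormal.1 k]
        simp
      · simp [h, b.orthonormal.2 (Ne.symm h)]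
    rw [this]
    exact hasSum_ite_eq j (a j)
  rw [real_inner_comm]
  exact (h1.unique h2)


/-- Factorization of the Riccati operator for the heat equation: with Λ compact
self-adjoint with positive eigenvalues λₖ ∈ Iσ, p continuous bounded nonnegative
on Iσ solving p² + (2/λ)p − 1 = 0 there, P = p(Λ) and A = −Λ⁻¹ (on the range of
Λ), one has (A P + P A − P² + I) z = 0 for every z = Λw in the domain of A. -/
theorem riccati_operator_factorization_heat
    {Z : Type*} [NormedAddCommGroup Z] [InnerProductSpace ℝ Z] [CompleteSpace Z]
    (b : HilbertBasis ℕ ℝ Z) (Λ : Z →L[ℝ] Z)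
    (hΛc : IsCompactOperator Λ) (hΛsa : IsSelfAdjoint Λ)
    (lam : ℕ → ℝ) (heig : ∀ k, Λ (b k) = lam k • b k)
    (hΛ : ∀ z, Λ z = ∑' k, (lam k * ⟪z, b k⟫_ℝ) • b k)
    (Iσ : Set ℝ) (hIσ : ∀ k, lam k ∈ Iσ) (hIσpos : ∀ l ∈ Iσ, 0 < l)
    (p : ℝ → ℝ) (hpc : ContinuousOn p Iσ)
    (hpb : BddAbove ((fun l => |p l|) '' Iσ))
    (hpnn : ∀ l ∈ Iσ, 0 ≤ p l)
    (hRic : ∀ l ∈ Iσ, p l ^ 2 + (2 / l) * p l - 1 = 0)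
    (P : Z →L[ℝ] Z)
    (hP : ∀ z, P z = ∑' k, (p (lam k) * ⟪z, b k⟫_ℝ) • b k)
    (A : Z → Z) (hA : ∀ w, A (Λ w) = -w) :
    ∀ w : Z, A (P (Λ w)) + P (A (Λ w)) - P (P (Λ w)) + Λ w = 0 := by
  obtain ⟨C, hC⟩ := hpb
  have hCb : ∀ k, |p (lam k)| ≤ C := fun k =>
    hC (Set.mem_image_of_mem _ (hIσ k))
  have s0 : ∀ z : Z, Summable fun k => ⟪z, b k⟫_ℝ ^ 2 := by
    intro z
    refine (b.summable_inner_mul_inner z z).congr fun k => ?_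
    rw [sq, real_inner_comm (b k) z]
  have sP : ∀ z : Z, Summable fun k => (p (lam k) * ⟪z, b k⟫_ℝ) ^ 2 := by
    intro z
    refine Summable.of_nonneg_of_le (fun k => sq_nonneg _) (fun k => ?_)
      ((s0 z).mul_left (C ^ 2))
    have h3 : p (lam k) ^ 2 ≤ C ^ 2 := by
      rw [← sq_abs]
      exact pow_le_pow_left₀ (abs_nonneg _) (hCb k) 2
    calc (p (lam k) * ⟪z, b k⟫_ℝ) ^ 2 = p (lam k) ^ 2 * ⟪z, b k⟫_ℝ ^ 2 := by ring
      _ ≤ C ^ 2 * ⟪z, b k⟫_ℝ ^ 2 := mul_le_mul_of_nonneg_right h3 (sq_nonneg _)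
  have hPc : ∀ (z : Z) (j : ℕ), ⟪P z, b j⟫_ℝ = p (lam j) * ⟪z, b j⟫_ℝ := by
    intro z j; rw [hP z]; exact hb_coeff b (sP z) j
  have hΛin : ∀ (z : Z) (j : ℕ), ⟪Λ z, b j⟫_ℝ = lam j * ⟪z, b j⟫_ℝ := by
    intro z j
    calc ⟪Λ z, b j⟫_ℝ = ⟪z, Λ (b j)⟫_ℝ := hΛsa.isSymmetric z (b j)
      _ = lam j * ⟪z, b j⟫_ℝ := by rw [heig, inner_smul_right]
  have sΛ : ∀ z : Z, Summable fun k => (lam k * ⟪z, b k⟫_ℝ) ^ 2 := by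
    intro z
    refine (s0 (Λ z)).congr fun k => ?_
    rw [hΛin z k]
  intro w
  have step1 : P (Λ w) = Λ (P w) := by
    rw [hP (Λ w), hΛ (P w)]
    refine tsum_congr fun k => ?_
    rw [hΛin w k, hPc w k]
    congr 1
    ring
  have hAPΛ : A (P (Λ w)) = -(P w) := by rw [step1]; exact hA (P w)
  have hPAΛ : P (A (Λ w)) = -(P w) := by rw [hA w, map_neg]
  have hs1 : Summable fun k => (lam k * ⟪w, b k⟫_ℝ) • b k := hb_summable b (sΛ w)
  have hs2 : Summable fun k => (p (lam k) * ⟪w, b k⟫_ℝ) • b k := hb_summable b (sP w)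
  have key : P (P (Λ w)) = Λ w - (2 : ℝ) • P w := by
    have hcoef : ∀ k, ⟪P (Λ w), b k⟫_ℝ = p (lam k) * (lam k * ⟪w, b k⟫_ℝ) := by
      intro k
      rw [hPc (Λ w) k, hΛin w k]
    rw [hP (P (Λ w))]
    simp only [hcoef]
    rw [hΛ w, hP w, ← Summable.tsum_const_smul (2 : ℝ) hs2,
      ← Summable.tsum_sub hs1 (Summable.const_smul (2 : ℝ) hs2)]
    refine tsum_congr fun k => ?_
    rw [smul_smul, ← sub_smul]
    congr 1
    have h := hRic (lam k) (hIσ k)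
    have hl : lam k ≠ 0 := (hIσpos _ (hIσ k)).ne'
    field_simp at h
    linear_combination (⟪w, b k⟫_ℝ) * h
  rw [hAPΛ, hPAΛ, key]
  simp [two_smul]
  abel
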